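/- arXiv:2012.10164 — 2 statements merged into one kernel-verified Lean document; each statement's English description precedes it below -/
import Mathlib

section
/- (Refined Kato inequality, algebraic form) Let n ≥ 2 and let A be a symmetric n×n real matrix with trace zero, and let v be a unit vector in ℝⁿ. Then |A v|² ≤ ((n-1)/n) |A|², where |A|² is the sum of squares of entries of A. Equivalently, (n/(n-1)) |A v|² ≤ |A|². -/
open Finset

/-- Refined Kato inequality, algebraic form: for a trace-free symmetric `n × n`
real matrix `A` and a unit vector `v`, one has `|A v|² ≤ ((n-1)/n) |A|²`, and
equivalently `(n/(n-1)) |A v|² ≤ |A|²`. -/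
theorem refined_kato_algebraic (n : ℕ) (hn : 2 ≤ n) (A : Matrix (Fin n) (Fin n) ℝ)
    (hsymm : A.IsSymm) (htrace : A.trace = 0) (v : Fin n → ℝ)
    (hv : ∑ i, (v i) ^ 2 = 1) :
    (∑ i, (∑ j, A i j * v j) ^ 2 ≤ (((n : ℝ) - 1) / n) * ∑ i, ∑ j, (A i j) ^ 2) ∧
    ((n : ℝ) / ((n : ℝ) - 1)) * ∑ i, (∑ j, A i j * v j) ^ 2 ≤ ∑ i, ∑ j, (A i j) ^ 2 := by
  have hsym : ∀ i j, A j i = A i j := fun i j => hsymm.apply i j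
  have hnR : (2:ℝ) ≤ (n:ℝ) := by exact_mod_cast hn
  have hn1 : (0:ℝ) < (n:ℝ) - 1 := by linarith
  have hn0 : (0:ℝ) < (n:ℝ) := by linarith
  have htr : ∑ i, A i i = 0 := by
    simpa [Matrix.trace, Matrix.diag] using htrace
  set w : Fin n → ℝ := fun i => ∑ j, A i j * v j with hw
  set t : ℝ := ∑ i, v i * w i with ht
  set u : Fin n → ℝ := fun i => w i - t * v i with hu
  set U : ℝ := ∑ i, u i ^ 2 with hUdef
  clear_value U
  have hUnn : 0 ≤ U := by
    rw [hUdef]; exact Finset.sum_nonneg fun i _ => sq_nonneg _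
  have hvv : ∑ i, v i * v i = 1 := by
    simpa [sq] using hv
  have huu : ∑ i, u i * u i = U := by
    simp [hUdef, sq]
  have huv : ∑ i, u i * v i = 0 := by
    have : ∑ i, u i * v i = (∑ i, v i * w i) - t * ∑ i, v i * v i := by
      rw [Finset.mul_sum, ← Finset.sum_sub_distrib]
      exact Finset.sum_congr rfl fun i _ => by simp [hu]; ring
    rw [this, hvv, ← ht]; ring
  have hweq : ∀ i, w i = u i + t * v i := fun i => by simp [hu]
  have huw : ∑ i, u i * w i = U := by
    have : ∑ i, u i * w i = (∑ i, u i * u i) + t * ∑ i, u i * v i := by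
      rw [Finset.mul_sum, ← Finset.sum_add_distrib]
      exact Finset.sum_congr rfl fun i _ => by rw [hweq i]; ring
    rw [this, huu, huv]; ring
  have hW : ∑ i, w i ^ 2 = t^2 + U := by
    have h0 : ∑ i, w i ^ 2 = ∑ i, (u i * u i + 2*t*(u i * v i) + t^2*(v i * v i)) :=
      Finset.sum_congr rfl fun i _ => by rw [hweq i]; ring
    rw [h0, Finset.sum_add_distrib, Finset.sum_add_distrib, ← Finset.mul_sum, ← Finset.mul_sum,
      huu, huv, hvv]; ring
  -- the extremal matrix
  set c : ℝ := t * (n:ℝ) / ((n:ℝ) - 1) with hc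
  set C : Fin n → Fin n → ℝ := fun i j => c * v i * v j + u i * v j + v i * u j with hC
  set D : Fin n → Fin n → ℝ := fun i j => if i = j then -c/(n:ℝ) else 0 with hD
  set B : Fin n → Fin n → ℝ := fun i j => C i j + D i j with hB
  clear_value B
  -- ⟨A, B⟩
  have hAC : ∑ i, ∑ j, A i j * C i j = c * t + 2 * U := by
    have h1 : ∀ i, ∑ j, A i j * (c * v i * v j + u i * v j) = (c * v i + u i) * w i := by
      intro i
      rw [hw, Finset.mul_sum]
      exact Finset.sum_congr rfl fun j _ => by ring
    have h2 : ∑ i, ∑ j, A i j * (v i * u j) = ∑ j, u j * w j := by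
      rw [Finset.sum_comm]
      refine Finset.sum_congr rfl fun j _ => ?_
      rw [hw, Finset.mul_sum]
      exact Finset.sum_congr rfl fun i _ => by rw [← hsym i j]; ring
    have h3 : ∑ i, ∑ j, A i j * C i j
        = (∑ i, ∑ j, A i j * (c * v i * v j + u i * v j)) + ∑ i, ∑ j, A i j * (v i * u j) := by
      rw [← Finset.sum_add_distrib]
      refine Finset.sum_congr rfl fun i _ => ?_
      rw [← Finset.sum_add_distrib]
      exact Finset.sum_congr rfl fun j _ => by simp only [hC]; ring
    rw [h3, h2]
    have h4 : ∑ i, (c * v i + u i) * w i = c * t + U := by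
      have : ∑ i, (c * v i + u i) * w i = c * (∑ i, v i * w i) + ∑ i, u i * w i := by
        rw [Finset.mul_sum, ← Finset.sum_add_distrib]
        exact Finset.sum_congr rfl fun i _ => by ring
      rw [this, ← ht, huw]
    rw [Finset.sum_congr rfl fun i _ => h1 i, h4]
    have h5 : ∑ j, u j * w j = U := huw
    rw [h5]; ring
  have hAD : ∑ i, ∑ j, A i j * D i j = 0 := by
    have h1 : ∀ i, ∑ j, A i j * D i j = A i i * (-c/(n:ℝ)) := by
      intro i
      rw [Finset.sum_eq_single i]
      · simp [hD]
      · intro j _ hj; simp [hD, Ne.symm hj]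
      · intro h; exact absurd (Finset.mem_univ i) h
    rw [Finset.sum_congr rfl fun i _ => h1 i, ← Finset.sum_mul, htr]; ring
  have hP : ∑ i, ∑ j, A i j * B i j = c * t + 2 * U := by
    have : ∑ i, ∑ j, A i j * B i j
        = (∑ i, ∑ j, A i j * C i j) + ∑ i, ∑ j, A i j * D i j := by
      rw [← Finset.sum_add_distrib]
      refine Finset.sum_congr rfl fun i _ => ?_
      rw [← Finset.sum_add_distrib]
      exact Finset.sum_congr rfl fun j _ => by simp only [hB]; ring
    rw [this, hAC, hAD]; ring
  -- |B|²
  have hCC : ∑ i, ∑ j, C i j ^ 2 = c^2 + 2 * U := by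
    have h1 : ∀ i, ∑ j, C i j ^ 2
        = (c^2*(v i*v i) + (u i*u i) + 2*c*(u i*v i)) * (∑ j, v j*v j)
          + (v i*v i) * (∑ j, u j*u j)
          + (2*c*(v i*v i) + 2*(u i*v i)) * (∑ j, u j*v j) := by
      intro i
      rw [Finset.mul_sum, Finset.mul_sum, Finset.mul_sum,
        ← Finset.sum_add_distrib, ← Finset.sum_add_distrib]
      exact Finset.sum_congr rfl fun j _ => by simp only [hC]; ring
    rw [Finset.sum_congr rfl fun i _ => h1 i]
    simp only [hvv, huu, huv, mul_one, mul_zero, add_zero]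
    rw [Finset.sum_add_distrib, ← Finset.sum_mul]
    have e1 : ∑ i, (c^2*(v i*v i) + (u i*u i) + 2*c*(u i*v i))
        = c^2 * (∑ i, v i * v i) + (∑ i, u i * u i) + 2*c*(∑ i, u i * v i) := by
      rw [Finset.mul_sum, Finset.mul_sum, ← Finset.sum_add_distrib, ← Finset.sum_add_distrib]
    rw [e1, hvv, huu, huv]; ring
  have hCD : ∑ i, ∑ j, C i j * D i j = -c^2/(n:ℝ) := by
    have h1 : ∀ i, ∑ j, C i j * D i j = C i i * (-c/(n:ℝ)) := by
      intro i
      rw [Finset.sum_eq_single i]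
      · simp [hD]
      · intro j _ hj; simp [hD, Ne.symm hj]
      · intro h; exact absurd (Finset.mem_univ i) h
    rw [Finset.sum_congr rfl fun i _ => h1 i]
    have h2 : ∑ i, C i i * (-c/(n:ℝ))
        = (-c/(n:ℝ)) * (c * (∑ i, v i * v i) + 2 * ∑ i, u i * v i) := by
      rw [Finset.mul_sum, Finset.mul_sum, ← Finset.sum_add_distrib, Finset.mul_sum]
      refine Finset.sum_congr rfl fun i _ => by simp only [hC]; ring
    rw [h2, hvv, huv]; ring
  have hDD : ∑ i, ∑ j, D i j ^ 2 = c^2/(n:ℝ) := by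
    have h1 : ∀ i, ∑ j, D i j ^ 2 = (c/(n:ℝ))^2 := by
      intro i
      rw [Finset.sum_eq_single i]
      · simp [hD]; ring
      · intro j _ hj; simp [hD, Ne.symm hj]
      · intro h; exact absurd (Finset.mem_univ i) h
    rw [Finset.sum_congr rfl fun i _ => h1 i, Finset.sum_const, Finset.card_univ,
      Fintype.card_fin, nsmul_eq_mul]
    field_simp
  have hQ : ∑ i, ∑ j, B i j ^ 2 = c^2 * (1 - 1/(n:ℝ)) + 2 * U := by
    have h1 : ∑ i, ∑ j, B i j ^ 2
        = (∑ i, ∑ j, C i j ^ 2) + 2 * (∑ i, ∑ j, C i j * D i j) + ∑ i, ∑ j, D i j ^ 2 := by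
      rw [Finset.mul_sum, ← Finset.sum_add_distrib, ← Finset.sum_add_distrib]
      refine Finset.sum_congr rfl fun i _ => ?_
      rw [Finset.mul_sum, ← Finset.sum_add_distrib, ← Finset.sum_add_distrib]
      exact Finset.sum_congr rfl fun j _ => by simp only [hB]; ring
    rw [h1, hCC, hCD, hDD]
    field_simp
    ring
  -- c * t = c^2 * (1 - 1/n), so ⟨A,B⟩ = |B|²
  have hct : c * t = c^2 * (1 - 1/(n:ℝ)) := by
    rw [hc]
    field_simp
  set Q : ℝ := c^2 * (1 - 1/(n:ℝ)) + 2 * U with hQdef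
  clear_value Q
  set S : ℝ := ∑ i, ∑ j, (A i j) ^ 2 with hS
  clear_value S
  have hSnn : 0 ≤ S := by
    rw [hS]; exact Finset.sum_nonneg fun i _ => Finset.sum_nonneg fun j _ => sq_nonneg _
  have hQnn : 0 ≤ Q := by
    have : 0 ≤ c^2 * (1 - 1/(n:ℝ)) := by
      apply mul_nonneg (sq_nonneg _)
      rw [sub_nonneg, div_le_one hn0]; linarith
    simp only [hQdef]; linarith
  have hCS : Q^2 ≤ S * Q := by
    have key : (∑ p : Fin n × Fin n, A p.1 p.2 * B p.1 p.2)^2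
        ≤ (∑ p : Fin n × Fin n, (A p.1 p.2)^2) * ∑ p : Fin n × Fin n, (B p.1 p.2)^2 :=
      Finset.sum_mul_sq_le_sq_mul_sq _ _ _
    rw [Fintype.sum_prod_type, Fintype.sum_prod_type, Fintype.sum_prod_type] at key
    rw [hP, hct] at key
    rw [hQ] at key
    rw [← hQdef, ← hS] at key
    exact key
  have hQS : Q ≤ S := by
    rcases eq_or_lt_of_le hQnn with h | h
    · rw [← h]; exact hSnn
    · nlinarith [hCS]
  -- conclude
  have hkey : ((n:ℝ) / ((n:ℝ) - 1)) * (t^2 + U) ≤ Q := by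
    have hcsq : c^2 * (1 - 1/(n:ℝ)) = (n:ℝ)/((n:ℝ)-1) * t^2 := by
      rw [hc]; field_simp
    rw [hQdef, hcsq]
    have h2U : ((n:ℝ) / ((n:ℝ) - 1)) * U ≤ 2 * U := by
      apply mul_le_mul_of_nonneg_right _ hUnn
      rw [div_le_iff₀ hn1]; linarith
    linarith [h2U]
  have hmain : ((n:ℝ) / ((n:ℝ) - 1)) * ∑ i, w i ^ 2 ≤ S := by
    rw [hW]; linarith
  have h1 : (∑ i, w i ^ 2) * (n:ℝ) ≤ ((n:ℝ) - 1) * S := by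
    have h2 := mul_le_mul_of_nonneg_left hmain (le_of_lt hn1)
    have e : ((n:ℝ)-1) * (((n:ℝ)/((n:ℝ)-1)) * ∑ i, w i ^ 2) = (∑ i, w i ^ 2) * (n:ℝ) := by
      field_simp
    rw [e] at h2; exact h2
  constructor
  · rw [div_mul_eq_mul_div, le_div_iff₀ hn0]
    exact h1
  · exact hmain
end

section
/- Let Φ : (0,∞) → ℝ be continuously differentiable and suppose that for all 0 < s < S one has Φ'(S)/sinh(S) ≥ Φ'(s)/sinh(s). Define F(τ) = c · Φ( log( (sqrt(τ+1)+sqrt(τ-1)) / (sqrt(τ+1)-sqrt(τ-1)) ) ) for τ ∈ (1,∞), with c > 0 a constant. Then F is differentiable with F'(τ) = c (τ²-1)^{-1/2} Φ'( log( (sqrt(τ+1)+sqrt(τ-1)) / (sqrt(τ+1)-sqrt(τ-1)) ) ), and F' is nondecreasing on (1,∞); in particular F is convex on (1,∞). -/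
open Real Set

/-- The change of variable `s = log((√(τ+1)+√(τ-1))/(√(τ+1)-√(τ-1)))`. -/
noncomputable def Lvar (τ : ℝ) : ℝ :=
  Real.log ((Real.sqrt (τ + 1) + Real.sqrt (τ - 1)) /
    (Real.sqrt (τ + 1) - Real.sqrt (τ - 1)))

lemma Lvar_eq_arsinh {τ : ℝ} (hτ : 1 < τ) :
    Lvar τ = Real.arsinh (Real.sqrt (τ ^ 2 - 1)) := by
  have h1 : (0:ℝ) ≤ τ - 1 := by linarith
  have h2 : (0:ℝ) ≤ τ + 1 := by linarith
  have hlt : Real.sqrt (τ - 1) < Real.sqrt (τ + 1) :=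
    Real.sqrt_lt_sqrt h1 (by linarith)
  have hab : Real.sqrt (τ + 1) * Real.sqrt (τ - 1) = Real.sqrt (τ ^ 2 - 1) := by
    rw [← Real.sqrt_mul h2]; ring_nf
  have key : (Real.sqrt (τ + 1) + Real.sqrt (τ - 1)) /
      (Real.sqrt (τ + 1) - Real.sqrt (τ - 1)) = τ + Real.sqrt (τ ^ 2 - 1) := by
    rw [div_eq_iff (by linarith)]
    have e1 : Real.sqrt (τ + 1) ^ 2 = τ + 1 := Real.sq_sqrt h2
    have e2 : Real.sqrt (τ - 1) ^ 2 = τ - 1 := Real.sq_sqrt h1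
    have e3 : Real.sqrt (τ ^ 2 - 1) ^ 2 = τ ^ 2 - 1 :=
      Real.sq_sqrt (by nlinarith)
    nlinarith [hab, e1, e2, e3, Real.sqrt_nonneg (τ ^ 2 - 1)]
  have h4 : Real.sqrt (1 + Real.sqrt (τ ^ 2 - 1) ^ 2) = τ := by
    rw [Real.sq_sqrt (by nlinarith)]
    rw [show 1 + (τ ^ 2 - 1) = τ ^ 2 by ring, Real.sqrt_sq (by linarith)]
  rw [Lvar, key, Real.arsinh, h4, add_comm]

lemma sinh_Lvar {τ : ℝ} (hτ : 1 < τ) :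
    Real.sinh (Lvar τ) = Real.sqrt (τ ^ 2 - 1) := by
  rw [Lvar_eq_arsinh hτ, Real.sinh_arsinh]

lemma Lvar_pos {τ : ℝ} (hτ : 1 < τ) : 0 < Lvar τ := by
  rw [Lvar_eq_arsinh hτ, ← Real.arsinh_zero, Real.arsinh_lt_arsinh]
  exact Real.sqrt_pos.2 (by nlinarith)

lemma Lvar_strictMono {τ₁ τ₂ : ℝ} (h1 : 1 < τ₁) (h12 : τ₁ < τ₂) :
    Lvar τ₁ < Lvar τ₂ := by
  rw [Lvar_eq_arsinh h1, Lvar_eq_arsinh (h1.trans h12), Real.arsinh_lt_arsinh]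
  apply Real.sqrt_lt_sqrt (by nlinarith)
  nlinarith

lemma hasDerivAt_Lvar {τ : ℝ} (hτ : 1 < τ) :
    HasDerivAt Lvar (Real.sqrt (τ ^ 2 - 1))⁻¹ τ := by
  have hpos : 0 < τ ^ 2 - 1 := by nlinarith
  have hs : 0 < Real.sqrt (τ ^ 2 - 1) := Real.sqrt_pos.2 hpos
  have hd1 : HasDerivAt (fun σ : ℝ => σ ^ 2 - 1) (2 * τ) τ := by
    simpa using ((hasDerivAt_pow 2 τ).sub_const 1)
  have hd2 : HasDerivAt (fun σ : ℝ => Real.sqrt (σ ^ 2 - 1))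
      (1 / (2 * Real.sqrt (τ ^ 2 - 1)) * (2 * τ)) τ :=
    (Real.hasDerivAt_sqrt (ne_of_gt hpos)).comp τ hd1
  have hd3 : HasDerivAt (fun σ : ℝ => Real.arsinh (Real.sqrt (σ ^ 2 - 1)))
      ((Real.sqrt (1 + Real.sqrt (τ ^ 2 - 1) ^ 2))⁻¹ *
        (1 / (2 * Real.sqrt (τ ^ 2 - 1)) * (2 * τ))) τ :=
    (Real.hasDerivAt_arsinh _).comp τ hd2
  have h4 : Real.sqrt (1 + Real.sqrt (τ ^ 2 - 1) ^ 2) = τ := by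
    rw [Real.sq_sqrt hpos.le,
      show 1 + (τ ^ 2 - 1) = τ ^ 2 by ring, Real.sqrt_sq (by linarith)]
  have heq : (Real.sqrt (1 + Real.sqrt (τ ^ 2 - 1) ^ 2))⁻¹ *
      (1 / (2 * Real.sqrt (τ ^ 2 - 1)) * (2 * τ)) = (Real.sqrt (τ ^ 2 - 1))⁻¹ := by
    rw [h4]; field_simp
  rw [heq] at hd3
  apply hd3.congr_of_eventuallyEq
  filter_upwards [eventually_gt_nhds hτ] with σ hσ
  exact (Lvar_eq_arsinh hσ)

lemma rpow_neg_half {τ : ℝ} (hτ : 1 < τ) :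
    (τ ^ 2 - 1) ^ (-(1 / 2 : ℝ)) = (Real.sqrt (τ ^ 2 - 1))⁻¹ := by
  have h : (0:ℝ) ≤ τ ^ 2 - 1 := by nlinarith
  rw [Real.rpow_neg h, Real.sqrt_eq_rpow]

/-- If `Φ` is `C¹` on `(0,∞)` and `s ↦ Φ'(s)/sinh(s)` is nondecreasing, then
`F(τ) = c Φ(L(τ))` (with `L` as above) is differentiable with
`F'(τ) = c (τ²-1)^{-1/2} Φ'(L(τ))`, `F'` is nondecreasing on `(1,∞)`,
and `F` is convex on `(1,∞)`. -/
theorem convexity_from_monotone_derivative (Φ Φ' : ℝ → ℝ) (c : ℝ) (hc : 0 < c)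
    (hderiv : ∀ s : ℝ, 0 < s → HasDerivAt Φ (Φ' s) s)
    (hcont : ContinuousOn Φ' (Ioi (0 : ℝ)))
    (hmono : ∀ s S : ℝ, 0 < s → s < S →
      Φ' s / Real.sinh s ≤ Φ' S / Real.sinh S) :
    (∀ τ : ℝ, 1 < τ →
      HasDerivAt (fun σ => c * Φ (Lvar σ))
        (c * (τ ^ 2 - 1) ^ (-(1 / 2 : ℝ)) * Φ' (Lvar τ)) τ) ∧
    (∀ τ₁ τ₂ : ℝ, 1 < τ₁ → τ₁ ≤ τ₂ →
      c * (τ₁ ^ 2 - 1) ^ (-(1 / 2 : ℝ)) * Φ' (Lvar τ₁) ≤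
        c * (τ₂ ^ 2 - 1) ^ (-(1 / 2 : ℝ)) * Φ' (Lvar τ₂)) ∧
    ConvexOn ℝ (Ioi (1 : ℝ)) (fun σ => c * Φ (Lvar σ)) := by
  have hF : ∀ τ : ℝ, 1 < τ →
      HasDerivAt (fun σ => c * Φ (Lvar σ))
        (c * (τ ^ 2 - 1) ^ (-(1 / 2 : ℝ)) * Φ' (Lvar τ)) τ := by
    intro τ hτ
    have h1 : HasDerivAt (fun σ => Φ (Lvar σ))
        (Φ' (Lvar τ) * (Real.sqrt (τ ^ 2 - 1))⁻¹) τ :=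
      (hderiv _ (Lvar_pos hτ)).comp τ (hasDerivAt_Lvar hτ)
    have := h1.const_mul c
    refine this.congr_deriv ?_
    rw [rpow_neg_half hτ]; ring
  have hMono : ∀ τ₁ τ₂ : ℝ, 1 < τ₁ → τ₁ ≤ τ₂ →
      c * (τ₁ ^ 2 - 1) ^ (-(1 / 2 : ℝ)) * Φ' (Lvar τ₁) ≤
        c * (τ₂ ^ 2 - 1) ^ (-(1 / 2 : ℝ)) * Φ' (Lvar τ₂) := by
    intro τ₁ τ₂ h1 h12
    rcases eq_or_lt_of_le h12 with rfl | hlt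
    · exact le_refl _
    have h2 : 1 < τ₂ := h1.trans hlt
    have key := hmono (Lvar τ₁) (Lvar τ₂) (Lvar_pos h1) (Lvar_strictMono h1 hlt)
    rw [sinh_Lvar h1, sinh_Lvar h2] at key
    rw [rpow_neg_half h1, rpow_neg_half h2]
    have e1 : c * (Real.sqrt (τ₁ ^ 2 - 1))⁻¹ * Φ' (Lvar τ₁)
        = c * (Φ' (Lvar τ₁) / Real.sqrt (τ₁ ^ 2 - 1)) := by ring
    have e2 : c * (Real.sqrt (τ₂ ^ 2 - 1))⁻¹ * Φ' (Lvar τ₂)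
        = c * (Φ' (Lvar τ₂) / Real.sqrt (τ₂ ^ 2 - 1)) := by ring
    rw [e1, e2]
    exact mul_le_mul_of_nonneg_left key hc.le
  refine ⟨hF, hMono, ?_⟩
  have hint : interior (Ioi (1:ℝ)) = Ioi 1 := interior_Ioi
  apply MonotoneOn.convexOn_of_deriv (convex_Ioi 1)
  · intro τ hτ
    exact ((hF τ hτ).continuousAt).continuousWithinAt
  · rw [hint]
    intro τ hτ
    exact ((hF τ hτ).differentiableAt).differentiableWithinAt
  · rw [hint]
    intro τ₁ h1 τ₂ h2 h12
    rw [(hF τ₁ h1).deriv, (hF τ₂ h2).deriv]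
    exact hMono τ₁ τ₂ h1 h12
end
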